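/- Let G be a complete multipartite graph K_{n₁,...,n_p} with p ≥ 3 parts and at least two distinct part sizes. Then the adjacency matrix of G has at least four distinct eigenvalues. -/

import Mathlib

open Matrix in
/-- If all eigenvalues of a real symmetric matrix are among `{a, b, c}`, then
`(A - a•1)(A - b•1)(A - c•1) = 0`. -/
lemma aux_cubic_eigen {n : Type*} [Fintype n] [DecidableEq n] {A : Matrix n n ℝ}
    (hA : A.IsHermitian) (a b c : ℝ)
    (h : ∀ i, hA.eigenvalues i = a ∨ hA.eigenvalues i = b ∨ hA.eigenvalues i = c) :
    (A - a • 1) * (A - b • 1) * (A - c • 1) = 0 := by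
  set U : Matrix n n ℝ := (hA.eigenvectorUnitary : Matrix n n ℝ) with hUdef
  have hU1 : U * star U = 1 := mem_unitaryGroup_iff.mp hA.eigenvectorUnitary.2
  have hU2 : star U * U = 1 := mem_unitaryGroup_iff'.mp hA.eigenvectorUnitary.2
  have hdiag : ∀ μ : ℝ, A - μ • 1 = U * diagonal (fun i => hA.eigenvalues i - μ) * star U := by
    intro μ
    have hsp := hA.spectral_theorem
    have h1 : (μ • (1 : Matrix n n ℝ)) = U * (μ • (1 : Matrix n n ℝ)) * star U := by
      rw [mul_smul_comm, smul_mul_assoc, Matrix.mul_one, hU1]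
    calc A - μ • 1 = U * diagonal (RCLike.ofReal ∘ hA.eigenvalues) * star U
          - U * (μ • (1 : Matrix n n ℝ)) * star U := by rw [Unitary.conjStarAlgAut_apply] at hsp; rw [← hsp, ← h1]
      _ = U * (diagonal (RCLike.ofReal ∘ hA.eigenvalues) - μ • (1 : Matrix n n ℝ)) * star U := by
          rw [← sub_mul, ← mul_sub]
      _ = U * diagonal (fun i => hA.eigenvalues i - μ) * star U := by
          have hd : diagonal (RCLike.ofReal ∘ hA.eigenvalues) - μ • (1 : Matrix n n ℝ)
              = diagonal (fun i => hA.eigenvalues i - μ) := by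
            ext i j
            rcases eq_or_ne i j with rfl | hij
            · simp [Matrix.diagonal_apply_eq, Matrix.one_apply_eq, RCLike.ofReal_real_eq_id]
            · simp [Matrix.diagonal_apply_ne _ hij, Matrix.one_apply_ne hij]
          rw [hd]
  rw [hdiag a, hdiag b, hdiag c]
  have hmid : ∀ (f g : n → ℝ),
      (U * diagonal f * star U) * (U * diagonal g * star U) = U * diagonal (f * g) * star U := by
    intro f g
    rw [Matrix.mul_assoc (U * diagonal f) (star U) (U * diagonal g * star U),
      ← Matrix.mul_assoc (star U) (U * diagonal g) (star U),
      ← Matrix.mul_assoc (star U) U (diagonal g), hU2, Matrix.one_mul,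
      ← Matrix.mul_assoc, Matrix.mul_assoc U (diagonal f) (diagonal g),
      Matrix.diagonal_mul_diagonal]
    rfl
  rw [hmid, hmid]
  show (U * diagonal (((fun i => hA.eigenvalues i - a) * fun i => hA.eigenvalues i - b) *
    fun i => hA.eigenvalues i - c)) * star U = 0
  have hz : ((fun i => hA.eigenvalues i - a) * (fun i => hA.eigenvalues i - b)) *
      (fun i => hA.eigenvalues i - c) = 0 := by
    funext i
    rcases h i with h' | h' | h' <;>
      · simp only [Pi.mul_apply, Pi.zero_apply, h']
        ring
  rw [hz]
  have hdz : (diagonal (0 : n → ℝ)) = 0 := by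
    ext i j
    rcases eq_or_ne i j with rfl | hij
    · simp
    · simp [Matrix.diagonal_apply_ne _ hij]
  rw [hdz, Matrix.mul_zero, Matrix.zero_mul]

/-- A finset of size at most 3 is covered by three elements. -/
lemma aux_cover3 (s : Finset ℝ) (h : s.card ≤ 3) :
    ∃ a b c : ℝ, ∀ x ∈ s, x = a ∨ x = b ∨ x = c := by
  interval_cases hc : s.card
  · rw [Finset.card_eq_zero] at hc; subst hc; exact ⟨0, 0, 0, by simp⟩
  · obtain ⟨a, rfl⟩ := Finset.card_eq_one.mp hc
    exact ⟨a, a, a, by simp⟩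
  · obtain ⟨a, b, _, rfl⟩ := Finset.card_eq_two.mp hc
    refine ⟨a, b, b, ?_⟩; intro x hx; simp at hx; tauto
  · obtain ⟨a, b, c, _, _, _, rfl⟩ := Finset.card_eq_three.mp hc
    refine ⟨a, b, c, ?_⟩; intro x hx; simp at hx; tauto

open Matrix

/-- A complete multipartite graph with `p ≥ 3` parts of
(positive) sizes not all equal has at least four distinct adjacency
eigenvalues. -/
theorem stmt13 (p : ℕ) (hp : 3 ≤ p) (nn : Fin p → ℕ) (hpos : ∀ i, 1 ≤ nn i)
    (hne : ∃ i j, nn i ≠ nn j)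
    (G : SimpleGraph (Σ i : Fin p, Fin (nn i))) [DecidableRel G.Adj]
    (hG : ∀ a b, G.Adj a b ↔ a.1 ≠ b.1)
    (hA : (G.adjMatrix ℝ).IsHermitian) :
    4 ≤ (Finset.univ.image hA.eigenvalues).card := by
  classical
  by_contra hlt
  push_neg at hlt
  have hcard : (Finset.univ.image hA.eigenvalues).card ≤ 3 := Nat.lt_succ_iff.mp hlt
  obtain ⟨a, b, c, hcov⟩ := aux_cover3 _ hcard
  have hcov' : ∀ i, hA.eigenvalues i = a ∨ hA.eigenvalues i = b ∨ hA.eigenvalues i = c :=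
    fun i => hcov _ (Finset.mem_image_of_mem _ (Finset.mem_univ i))
  set A : Matrix (Σ i : Fin p, Fin (nn i)) (Σ i : Fin p, Fin (nn i)) ℝ := G.adjMatrix ℝ
    with hAdef
  -- a part of size ≥ 2 exists
  obtain ⟨i₁, i₂, hne12⟩ := hne
  have h2 : ∃ i₀, 2 ≤ nn i₀ := by
    rcases Nat.lt_or_ge (nn i₁) 2 with h | h
    · refine ⟨i₂, ?_⟩
      have := hpos i₁
      have := hpos i₂
      omega
    · exact ⟨i₁, h⟩
  obtain ⟨i₀, hi₀⟩ := h2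
  -- the zero eigenvector
  set u : (Σ i : Fin p, Fin (nn i)) := ⟨i₀, ⟨0, by omega⟩⟩ with hu
  set u' : (Σ i : Fin p, Fin (nn i)) := ⟨i₀, ⟨1, by omega⟩⟩ with hu'
  have huu' : u ≠ u' := by
    rw [hu, hu']
    intro h
    have h2 := (Sigma.mk.inj_iff.mp h).2
    simp only [heq_eq_eq, Fin.mk.injEq] at h2
    omega
  set x : (Σ i : Fin p, Fin (nn i)) → ℝ := Pi.single u 1 - Pi.single u' 1 with hx
  have hxu : x u = 1 := by
    rw [hx]
    simp only [Pi.sub_apply]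
    rw [Pi.single_eq_same, Pi.single_eq_of_ne huu']
    norm_num
  have hAx : A *ᵥ x = 0 := by
    funext v
    have hrow : A v u = A v u' := by
      simp only [hAdef, SimpleGraph.adjMatrix_apply]
      have hiff : G.Adj v u ↔ G.Adj v u' := by rw [hG, hG]
      by_cases hadj : G.Adj v u
      · rw [if_pos hadj, if_pos (hiff.mp hadj)]
      · rw [if_neg hadj, if_neg (fun h => hadj (hiff.mpr h))]
    simp only [hx, Matrix.mulVec_sub, Matrix.mulVec_single, mul_one, Pi.sub_apply, Pi.zero_apply,
      Pi.smul_apply, op_smul_eq_mul, Matrix.col_apply]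
    rw [hrow]
    ring
  -- product of the three shifts vanishes, hence abc = 0
  have hcube : (A - a • 1) * (A - b • 1) * (A - c • 1) = 0 := by
    exact aux_cubic_eigen hA a b c hcov'
  have hshift : ∀ (μ : ℝ) (y : (Σ i : Fin p, Fin (nn i)) → ℝ), (A - μ • 1) *ᵥ y = A *ᵥ y - μ • y := by
    intro μ y
    rw [Matrix.sub_mulVec, Matrix.smul_mulVec, Matrix.one_mulVec]
  have hpow : ∀ (μ : ℝ) (y : (Σ i : Fin p, Fin (nn i)) → ℝ), A *ᵥ y = 0 →
      (A - μ • 1) *ᵥ y = (-μ) • y := by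
    intro μ y hy
    rw [hshift μ, hy, zero_sub, neg_smul]
  have habc : a * b * c = 0 := by
    have h0 : ((A - a • 1) * (A - b • 1) * (A - c • 1)) *ᵥ x = 0 := by rw [hcube]; simp
    rw [← Matrix.mulVec_mulVec, ← Matrix.mulVec_mulVec] at h0
    have hAx2 : A *ᵥ ((-c) • x) = 0 := by rw [Matrix.mulVec_smul, hAx, smul_zero]
    have hAx3 : A *ᵥ ((-b) • (-c) • x) = 0 := by
      rw [Matrix.mulVec_smul, Matrix.mulVec_smul, hAx, smul_zero, smul_zero]
    rw [hpow c x hAx, hpow b _ hAx2, hpow a _ hAx3] at h0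
    have h0u := congrFun h0 u
    simp only [Pi.smul_apply, Pi.zero_apply, smul_eq_mul, hxu, mul_one] at h0u
    linear_combination -h0u
  -- reorder the cover so that its third element is 0
  have hcov0 : ∃ a' b' : ℝ, ∀ i, hA.eigenvalues i = a' ∨ hA.eigenvalues i = b' ∨
      hA.eigenvalues i = 0 := by
    rcases mul_eq_zero.mp habc with hab | hc
    · rcases mul_eq_zero.mp hab with ha | hb
      · exact ⟨b, c, fun i => by rcases hcov' i with h | h | h <;> rw [h] <;> tauto⟩
      · exact ⟨a, c, fun i => by rcases hcov' i with h | h | h <;> rw [h] <;> tauto⟩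
    · exact ⟨a, b, fun i => by rcases hcov' i with h | h | h <;> rw [h] <;> tauto⟩
  obtain ⟨α, β, hcovz⟩ := hcov0
  have hcube0 : (A - α • 1) * (A - β • 1) * A = 0 := by
    simpa using aux_cubic_eigen hA α β 0 hcovz
  -- the partition matrix
  set Y : Matrix (Σ i : Fin p, Fin (nn i)) (Fin p) ℝ := fun v j => if v.1 = j then 1 else 0 with hY
  set M : Matrix (Fin p) (Fin p) ℝ := fun i j => if i = j then 0 else (nn j : ℝ) with hM
  have hAY : A * Y = Y * M := by
    funext v j
    simp only [Matrix.mul_apply]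
    rw [← Finset.univ_sigma_univ, Finset.sum_sigma]
    have hterm : ∀ i : Fin p, ∑ w : Fin (nn i), A v ⟨i, w⟩ * Y ⟨i, w⟩ j
        = if i = j then (if v.1 ≠ i then (nn i : ℝ) else 0) else 0 := by
      intro i
      by_cases hij : i = j
      · subst hij
        simp only [hY, if_pos rfl, mul_one]
        simp only [if_true, eq_self_iff_true, ite_true]
        by_cases hvi : v.1 ≠ i
        · have hone : ∀ w : Fin (nn i), A v ⟨i, w⟩ = 1 := by
            intro w
            simp only [hAdef, SimpleGraph.adjMatrix_apply]
            rw [if_pos ((hG v ⟨i, w⟩).mpr hvi)]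
          rw [if_pos hvi]
          simp [hone]
        · push_neg at hvi
          have hzero : ∀ w : Fin (nn i), A v ⟨i, w⟩ = 0 := by
            intro w
            simp only [hAdef, SimpleGraph.adjMatrix_apply]
            rw [if_neg]
            rw [hG]
            simpa using hvi
          simp [hzero, hvi]
      · simp only [hY]
        rw [if_neg hij]
        simp [hij]
    rw [Finset.sum_congr rfl (fun i _ => hterm i), Finset.sum_ite_eq' Finset.univ j]
    have hR : ∑ i : Fin p, Y v i * M i j = M v.1 j := by
      simp only [hY, ite_mul, one_mul, zero_mul]
      rw [Finset.sum_ite_eq Finset.univ v.1]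
      simp
    rw [hR]
    simp only [hM, Finset.mem_univ, if_pos]
    by_cases h : v.1 = j <;> simp [h]
  have hshiftY : ∀ μ : ℝ, (A - μ • 1) * Y = Y * (M - μ • 1) := by
    intro μ
    rw [Matrix.sub_mul, Matrix.mul_sub, hAY, Matrix.smul_mul, Matrix.one_mul,
      Matrix.mul_smul, Matrix.mul_one]
  have hQ : Y * ((M - α • 1) * ((M - β • 1) * M)) = 0 := by
    have hc : (A - α • 1) * ((A - β • 1) * (A * Y)) = 0 := by
      rw [← Matrix.mul_assoc, ← Matrix.mul_assoc, hcube0, Matrix.zero_mul]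
    rw [hAY, ← Matrix.mul_assoc (A - β • 1), hshiftY β, Matrix.mul_assoc Y,
      ← Matrix.mul_assoc (A - α • 1), hshiftY α, Matrix.mul_assoc Y] at hc
    exact hc
  have hQ0 : (M - α • 1) * ((M - β • 1) * M) = 0 := by
    funext i j
    have hzpos : 0 < nn i := hpos i
    have hent := congrFun (congrFun hQ ⟨i, ⟨0, hzpos⟩⟩) j
    rw [Matrix.mul_apply] at hent
    have hsimp : ∀ k, Y ⟨i, ⟨0, hzpos⟩⟩ k * ((M - α • 1) * ((M - β • 1) * M)) k j
        = if i = k then ((M - α • 1) * ((M - β • 1) * M)) k j else 0 := by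
      intro k
      by_cases h : i = k <;> simp [hY, h]
    rw [Finset.sum_congr rfl (fun k _ => hsimp k), Finset.sum_ite_eq,
      if_pos (Finset.mem_univ _)] at hent
    simpa using hent
  -- M has a right inverse
  have hp1 : ((p : ℝ) - 1) ≠ 0 := by
    have h3 : (3 : ℝ) ≤ p := by exact_mod_cast hp
    linarith
  set Ninv : Matrix (Fin p) (Fin p) ℝ :=
    fun i j => ((nn i : ℝ))⁻¹ * (((p : ℝ) - 1)⁻¹ - if i = j then 1 else 0) with hNinv
  have hMN : M * Ninv = 1 := by
    funext i k
    rw [Matrix.mul_apply]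
    simp only [hM, hNinv]
    have hterm : ∀ j : Fin p,
        (if i = j then 0 else (nn j : ℝ)) *
          (((nn j : ℝ))⁻¹ * (((p : ℝ) - 1)⁻¹ - if j = k then 1 else 0))
        = ((((p : ℝ) - 1)⁻¹ - if j = k then 1 else 0))
          - (if i = j then ((((p : ℝ) - 1)⁻¹ - if j = k then 1 else 0)) else 0) := by
      intro j
      have hnj : (nn j : ℝ) ≠ 0 := by
        have := hpos j
        positivity
      by_cases h : i = j
      · simp [h]
      · rw [if_neg h, if_neg h]
        field_simp
        ring
    rw [Finset.sum_congr rfl (fun j _ => hterm j), Finset.sum_sub_distrib,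
      Finset.sum_sub_distrib, Finset.sum_const, Finset.sum_ite_eq' Finset.univ k,
      Finset.sum_ite_eq Finset.univ i]
    simp only [Finset.mem_univ, if_pos, Finset.card_univ, Fintype.card_fin, nsmul_eq_mul]
    rw [Matrix.one_apply]
    by_cases h : i = k
    · rw [if_pos h]
      field_simp
      ring
    · rw [if_neg h]
      field_simp
      ring
  have hP : (M - α • 1) * (M - β • 1) = 0 := by
    have : ((M - α • 1) * ((M - β • 1) * M)) * Ninv = 0 := by rw [hQ0, Matrix.zero_mul]
    rw [← Matrix.mul_assoc, Matrix.mul_assoc ((M - α • 1) * (M - β • 1)), hMN,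
      Matrix.mul_one] at this
    exact this
  -- expand and take diagonal entries
  set S : ℝ := ∑ k : Fin p, (nn k : ℝ) with hS
  have hMM : ∀ i : Fin p, (M * M) i i = S * (nn i : ℝ) - (nn i : ℝ) * (nn i : ℝ) := by
    intro i
    rw [Matrix.mul_apply]
    simp only [hM]
    have hterm : ∀ k : Fin p,
        (if i = k then (0:ℝ) else (nn k : ℝ)) * (if k = i then 0 else (nn i : ℝ))
        = (nn k : ℝ) * (nn i : ℝ) - (if i = k then (nn k : ℝ) * (nn i : ℝ) else 0) := by
      intro k
      by_cases h : i = k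
      · simp [h]
      · rw [if_neg h, if_neg (Ne.symm h), if_neg h]
        ring
    rw [Finset.sum_congr rfl (fun k _ => hterm k), Finset.sum_sub_distrib,
      Finset.sum_ite_eq Finset.univ i]
    simp only [Finset.mem_univ, if_pos]
    rw [← Finset.sum_mul, hS]
  have hexp : (M - α • 1) * (M - β • 1)
      = M * M - β • M - α • M + (α * β) • (1 : Matrix (Fin p) (Fin p) ℝ) := by
    have e1 : M * (β • (1 : Matrix (Fin p) (Fin p) ℝ)) = β • M := by
      rw [Matrix.mul_smul, Matrix.mul_one]
    have e2 : (α • (1 : Matrix (Fin p) (Fin p) ℝ)) * M = α • M := by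
      rw [Matrix.smul_mul, Matrix.one_mul]
    have e3 : (α • (1 : Matrix (Fin p) (Fin p) ℝ)) * (β • (1 : Matrix (Fin p) (Fin p) ℝ))
        = (α * β) • (1 : Matrix (Fin p) (Fin p) ℝ) := by
      rw [Matrix.smul_mul, Matrix.one_mul, smul_smul]
    rw [Matrix.sub_mul, Matrix.mul_sub, Matrix.mul_sub, e1, e2, e3]
    abel
  have hdiagP : ∀ i : Fin p, S * (nn i : ℝ) - (nn i : ℝ) * (nn i : ℝ) + α * β = 0 := by
    intro i
    have h0 := congrFun (congrFun hP i) i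
    rw [hexp] at h0
    simp only [Matrix.add_apply, Matrix.sub_apply, Matrix.smul_apply, Matrix.one_apply_eq,
      Matrix.zero_apply, smul_eq_mul] at h0
    have hMii : M i i = 0 := by simp [hM]
    rw [hMii, hMM i] at h0
    linarith [h0]
  -- derive the contradiction
  have e1 := hdiagP i₁
  have e2 := hdiagP i₂
  have hne12' : (nn i₁ : ℝ) ≠ (nn i₂ : ℝ) := by exact_mod_cast hne12
  have hSij : S = (nn i₁ : ℝ) + (nn i₂ : ℝ) := by
    have hmul : ((nn i₁ : ℝ) - (nn i₂ : ℝ)) * (S - (nn i₁ : ℝ) - (nn i₂ : ℝ)) = 0 := by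
      linear_combination e1 - e2
    have hne' : (nn i₁ : ℝ) - (nn i₂ : ℝ) ≠ 0 := sub_ne_zero.mpr hne12'
    have := (mul_eq_zero.mp hmul).resolve_left hne'
    linarith
  have hii : i₁ ≠ i₂ := fun h => hne12 (by rw [h])
  have hk : ∃ k : Fin p, k ≠ i₁ ∧ k ≠ i₂ := by
    by_contra hcon
    push_neg at hcon
    have hsub : (Finset.univ : Finset (Fin p)) ⊆ {i₁, i₂} := by
      intro k _
      simp only [Finset.mem_insert, Finset.mem_singleton]
      by_cases h : k = i₁
      · exact Or.inl h
      · exact Or.inr (hcon k h)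
    have hle := Finset.card_le_card hsub
    have h2 : ({i₁, i₂} : Finset (Fin p)).card ≤ 2 := by
      apply le_trans (Finset.card_insert_le _ _)
      simp
    rw [Finset.card_univ, Fintype.card_fin] at hle
    omega
  obtain ⟨k₀, hk1, hk2⟩ := hk
  have hsum : (nn i₁ : ℝ) + (nn i₂ : ℝ) + (nn k₀ : ℝ) ≤ S := by
    have hsub : ({i₁, i₂, k₀} : Finset (Fin p)) ⊆ Finset.univ := Finset.subset_univ _
    have hle := Finset.sum_le_sum_of_subset_of_nonneg hsub
      (fun k _ _ => by positivity : ∀ k ∈ Finset.univ, k ∉ ({i₁, i₂, k₀} : Finset (Fin p)) →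
        (0:ℝ) ≤ (nn k : ℝ))
    have heq : ∑ k ∈ ({i₁, i₂, k₀} : Finset (Fin p)), (nn k : ℝ)
        = (nn i₁ : ℝ) + (nn i₂ : ℝ) + (nn k₀ : ℝ) := by
      rw [Finset.sum_insert (by simp [hii, hk1.symm]), Finset.sum_insert (by simp [hk2.symm]),
        Finset.sum_singleton]
      ring
    rw [heq] at hle
    exact hle
  have hk0 : (1 : ℝ) ≤ (nn k₀ : ℝ) := by exact_mod_cast hpos k₀
  linarith [hSij, hsum, hk0]
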